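/- For the synchronous generator with twice-differentiable signals, define the stored energy E = (1/2) J ω², its derivative p = E', the tangent-space energy E_t = (1/2) J (ω')², the control reactive power rate Q̇^u = (P_m/ω) ω' - ω · (d/dt)(P_m/ω), and the port reactive power rate Q̇^r = (-P/ω) ω' - ω · (d/dt)(-P/ω). Then the second-order energy-space identity p'(t) = 4 E_t(t) - Q̇^u(t) - Q̇^r(t) holds for all t. -/
import Mathlib


/-- For the synchronous generator with twice-differentiable signals,
the second-order energy-space identity `p' = 4 E_t - Q̇ᵘ - Q̇ʳ` holds, where
`E = (1/2) J ω²`, `p = E'`, `E_t = (1/2) J (ω')²`,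
`Q̇ᵘ = (P_m/ω) ω' - ω (P_m/ω)'`, and `Q̇ʳ = (-P/ω) ω' - ω (-P/ω)'`. -/
theorem generator_second_order_energy_identity
    (J D : ℝ) (hJ : 0 < J) (hD : 0 ≤ D)
    (ω Pm P : ℝ → ℝ)
    (hω : Differentiable ℝ ω) (hω' : Differentiable ℝ (deriv ω))
    (hPm : Differentiable ℝ Pm) (hPm' : Differentiable ℝ (deriv Pm))
    (hP : Differentiable ℝ P) (hP' : Differentiable ℝ (deriv P))
    (hωpos : ∀ t : ℝ, 0 < ω t)
    (hdyn : ∀ t : ℝ, J * deriv ω t = -D * ω t + (Pm t - P t) / ω t)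
    (E p Et Qdu Qdr : ℝ → ℝ)
    (hE : ∀ t : ℝ, E t = (1/2) * J * (ω t)^2)
    (hp : ∀ t : ℝ, p t = deriv E t)
    (hEt : ∀ t : ℝ, Et t = (1/2) * J * (deriv ω t)^2)
    (hQdu : ∀ t : ℝ,
      Qdu t = (Pm t / ω t) * deriv ω t - ω t * deriv (fun s => Pm s / ω s) t)
    (hQdr : ∀ t : ℝ,
      Qdr t = (-P t / ω t) * deriv ω t - ω t * deriv (fun s => -P s / ω s) t) :
    ∀ t : ℝ, deriv p t = 4 * Et t - Qdu t - Qdr t := by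
  intro t
  have hne : ∀ s : ℝ, ω s ≠ 0 := fun s => (hωpos s).ne'
  -- deriv of E
  have hEderiv : ∀ s, deriv E s = J * ω s * deriv ω s := by
    intro s
    have hEfun : E = fun u => (1/2) * J * (ω u)^2 := funext hE
    have h : HasDerivAt (fun u => (1/2) * J * (ω u)^2)
        ((1/2) * J * ((2:ℕ) * ω s ^ 1 * deriv ω s)) s :=
      (((hω s).hasDerivAt.pow 2).const_mul ((1:ℝ)/2 * J))
    rw [hEfun, h.deriv]; ring
  have hpfun : p = fun s => J * ω s * deriv ω s := by
    funext s; rw [hp, hEderiv]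
  -- deriv of p
  have hpderiv : deriv p t
      = J * deriv ω t * deriv ω t + J * ω t * deriv (deriv ω) t := by
    have h : HasDerivAt (fun s => (J * ω s) * deriv ω s)
        ((J * deriv ω t) * deriv ω t + (J * ω t) * deriv (deriv ω) t) t :=
      (((hω t).hasDerivAt).const_mul J).mul (hω' t).hasDerivAt
    rw [hpfun]
    simpa [mul_assoc] using h.deriv
  -- quotient rules
  have hQm : deriv (fun s => Pm s / ω s) t
      = (deriv Pm t * ω t - Pm t * deriv ω t) / (ω t)^2 :=
    ((hPm t).hasDerivAt.div (hω t).hasDerivAt (hne t)).deriv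
  have hQp : deriv (fun s => -P s / ω s) t
      = (-deriv P t * ω t - -P t * deriv ω t) / (ω t)^2 :=
    (((hP t).hasDerivAt.neg).div (hω t).hasDerivAt (hne t)).deriv
  -- differentiate the dynamics
  have hdfun : (fun s => J * deriv ω s)
      = fun s => -D * ω s + (Pm s - P s) / ω s := funext hdyn
  have hdyn' : J * deriv (deriv ω) t
      = -D * deriv ω t
        + ((deriv Pm t - deriv P t) * ω t - (Pm t - P t) * deriv ω t) / (ω t)^2 := by
    have hL : HasDerivAt (fun s => J * deriv ω s) (J * deriv (deriv ω) t) t :=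
      (hω' t).hasDerivAt.const_mul J
    have hR : HasDerivAt (fun s => -D * ω s + (Pm s - P s) / ω s)
        (-D * deriv ω t
          + ((deriv Pm t - deriv P t) * ω t - (Pm t - P t) * deriv ω t) / (ω t)^2) t :=
      ((hω t).hasDerivAt.const_mul (-D)).add
        (((hPm t).hasDerivAt.sub (hP t).hasDerivAt).div (hω t).hasDerivAt (hne t))
    have := hL.deriv
    rw [hdfun] at this
    rw [← this, hR.deriv]
  have hd := hdyn t
  rw [hpderiv, hEt, hQdu, hQdr, hQm, hQp]
  have ha := hne t
  linear_combination (ω t) * hdyn' - (deriv ω t) * hd
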